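/- The mean-squared error of the doubly robust mean estimator satisfies E[(θ* − θ̂_DR)²] ≤ 2·((1/n)·Var[Y_1] + ((m+2n)/((m+n)·n))·Var[f̂(X_1)]). -/

import Mathlib

open MeasureTheory ProbabilityTheory Finset

lemma var_add_le' {Ω : Type*} [MeasurableSpace Ω] {μ : Measure Ω} [IsProbabilityMeasure μ]
    (U V : Ω → ℝ) (hU : MemLp U 2 μ) (hV : MemLp V 2 μ) :
    variance (U + V) μ ≤ 2 * variance U μ + 2 * variance V μ := by
  have hUV := hU.add hV
  have hEU : Integrable U μ := hU.integrable one_le_two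
  have hEV : Integrable V μ := hV.integrable one_le_two
  have hintUV : μ[U + V] = μ[U] + μ[V] := integral_add hEU hEV
  have hiU : Integrable (fun ω => (U ω - μ[U]) ^ 2) μ := by
    have := (hU.sub (memLp_const (μ[U]))).integrable_sq
    simpa using this
  have hiV : Integrable (fun ω => (V ω - μ[V]) ^ 2) μ := by
    have := (hV.sub (memLp_const (μ[V]))).integrable_sq
    simpa using this
  have hiUV : Integrable (fun ω => ((U ω + V ω) - (μ[U] + μ[V])) ^ 2) μ := by
    have := (hUV.sub (memLp_const (μ[U] + μ[V]))).integrable_sq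
    simpa using this
  have h1 : variance (U + V) μ = ∫ ω, ((U ω + V ω) - (μ[U] + μ[V])) ^ 2 ∂μ := by
    rw [variance_eq_integral hUV.aemeasurable, hintUV]
    simp only [Pi.pow_apply, Pi.sub_apply, Pi.add_apply]
  have h2 : variance U μ = ∫ ω, (U ω - μ[U]) ^ 2 ∂μ := by
    rw [variance_eq_integral hU.aemeasurable]
  have h3 : variance V μ = ∫ ω, (V ω - μ[V]) ^ 2 ∂μ := by
    rw [variance_eq_integral hV.aemeasurable]
  rw [h1, h2, h3]
  have key : ∫ ω, ((U ω + V ω) - (μ[U] + μ[V])) ^ 2 ∂μ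
      ≤ ∫ ω, (2 * (U ω - μ[U]) ^ 2 + 2 * (V ω - μ[V]) ^ 2) ∂μ := by
    apply integral_mono _ ((hiU.const_mul 2).add (hiV.const_mul 2))
    · intro ω
      simp only [Pi.add_apply]
      nlinarith [sq_nonneg ((U ω - μ[U]) - (V ω - μ[V]))]
    · exact hiUV
  calc ∫ ω, ((U ω + V ω) - (μ[U] + μ[V])) ^ 2 ∂μ
      ≤ ∫ ω, (2 * (U ω - μ[U]) ^ 2 + 2 * (V ω - μ[V]) ^ 2) ∂μ := key
    _ = 2 * ∫ ω, (U ω - μ[U]) ^ 2 ∂μ + 2 * ∫ ω, (V ω - μ[V]) ^ 2 ∂μ := by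
        rw [integral_add (hiU.const_mul 2) (hiV.const_mul 2), integral_const_mul,
          integral_const_mul]

lemma sum_ite_fin (m n : ℕ) (x y : ℝ) :
    (∑ i : Fin (m + n), if m ≤ (i : ℕ) then x else y) = n * x + m * y := by
  rw [Fin.sum_univ_eq_sum_range (fun k => if m ≤ k then x else y)]
  rw [Finset.sum_ite, Finset.sum_const, Finset.sum_const]
  have h1 : (Finset.range (m + n)).filter (fun k => m ≤ k) = Finset.Ico m (m + n) := by
    ext k; simp [Finset.mem_filter, Finset.mem_range, Finset.mem_Ico]; omega
  have h2 : (Finset.range (m + n)).filter (fun k => ¬ m ≤ k) = Finset.range m := by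
    ext k; simp [Finset.mem_filter, Finset.mem_range]; omega
  rw [h1, h2, Nat.card_Ico, Finset.card_range]
  simp [nsmul_eq_mul]

/-- The mean-squared error of the doubly robust mean estimator satisfies
`E[(θ* − θ̂_DR)²] ≤ 2·((1/n)·Var[Y_1] + ((m+2n)/((m+n)·n))·Var[f̂(X_1)])`. -/
theorem doubly_robust_mean_estimator_mse_upper_var
    {Ω : Type*} [MeasurableSpace Ω] (μ : Measure Ω) [IsProbabilityMeasure μ]
    {𝒳 : Type*} [MeasurableSpace 𝒳]
    (m n : ℕ) (hm : 0 < m) (hn : 0 < n)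
    (X : Fin (m + n) → Ω → 𝒳) (Y : Fin (m + n) → Ω → ℝ)
    (hXmeas : ∀ i, Measurable (X i)) (hYmeas : ∀ i, Measurable (Y i))
    (h_indep : iIndepFun
      (fun i ω => (X i ω, Y i ω)) μ)
    (h_ident : ∀ i : Fin (m + n),
      IdentDistrib (fun ω => (X i ω, Y i ω))
        (fun ω => (X ⟨0, by omega⟩ ω, Y ⟨0, by omega⟩ ω)) μ μ)
    (f : 𝒳 → ℝ) (hf : Measurable f)
    (hY2 : MemLp (Y ⟨0, by omega⟩) 2 μ)
    (hfX2 : MemLp (fun ω => f (X ⟨0, by omega⟩ ω)) 2 μ) :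
    ∫ ω, ((∫ ω', Y ⟨0, by omega⟩ ω' ∂μ)
        - ((1 / (m + n : ℝ)) * (∑ i : Fin (m + n), f (X i ω))
          - (1 / (n : ℝ)) * ∑ i ∈ Finset.univ.filter (fun i : Fin (m + n) => m ≤ (i : ℕ)),
              (f (X i ω) - Y i ω))) ^ 2 ∂μ
      ≤ 2 * ((1 / (n : ℝ)) *
            (∫ ω, (Y ⟨0, by omega⟩ ω - ∫ ω', Y ⟨0, by omega⟩ ω' ∂μ) ^ 2 ∂μ)
          + ((m + 2 * n : ℝ) / ((m + n : ℝ) * n)) *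
            ∫ ω, (f (X ⟨0, by omega⟩ ω) - ∫ ω', f (X ⟨0, by omega⟩ ω') ∂μ) ^ 2 ∂μ) := by
  have hmR : (0:ℝ) < m := by exact_mod_cast hm
  have hnR : (0:ℝ) < n := by exact_mod_cast hn
  set i0 : Fin (m + n) := ⟨0, by omega⟩ with hi0
  set θ : ℝ := ∫ ω', Y i0 ω' ∂μ with hθ
  set G : ℝ := ∫ ω', f (X i0 ω') ∂μ with hG
  set VY : ℝ := variance (Y i0) μ with hVY
  set Vg : ℝ := variance (fun ω => f (X i0 ω)) μ with hVg
  have hVYnn : 0 ≤ VY := variance_nonneg _ _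
  have hVgnn : 0 ≤ Vg := variance_nonneg _ _
  set c : Fin (m + n) → ℝ :=
    fun i => if m ≤ (i : ℕ) then 1/((m:ℝ)+n) - 1/(n:ℝ) else 1/((m:ℝ)+n) with hc
  set d : Fin (m + n) → ℝ := fun i => if m ≤ (i : ℕ) then 1/(n:ℝ) else 0 with hd
  set φ : Fin (m + n) → 𝒳 × ℝ → ℝ := fun i p => c i * f p.1 + d i * p.2 with hφ
  have hφm : ∀ i, Measurable (φ i) := fun i =>
    (measurable_const.mul (hf.comp measurable_fst)).add (measurable_const.mul measurable_snd)
  set T : Fin (m + n) → Ω → ℝ := fun i ω => φ i (X i ω, Y i ω) with hT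
  set S : Ω → ℝ := fun ω => ∑ i, T i ω with hS
  -- identically distributed pieces
  have hTid : ∀ i, IdentDistrib (T i)
      (fun ω => c i * f (X i0 ω) + d i * Y i0 ω) μ μ := fun i =>
    (h_ident i).comp (hφm i)
  have hT0mem : ∀ i, MemLp (fun ω => c i * f (X i0 ω) + d i * Y i0 ω) 2 μ := fun i =>
    (hfX2.const_mul (c i)).add (hY2.const_mul (d i))
  have hTmem : ∀ i, MemLp (T i) 2 μ := fun i => (hTid i).symm.memLp_snd (hT0mem i)
  have hTint : ∀ i, Integrable (T i) μ := fun i => (hTmem i).integrable one_le_two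
  -- means
  have hTavg : ∀ i, ∫ ω, T i ω ∂μ = c i * G + d i * θ := by
    intro i
    rw [(hTid i).integral_eq,
      integral_add (((hfX2.integrable one_le_two)).const_mul _)
        (((hY2.integrable one_le_two)).const_mul _),
      integral_const_mul, integral_const_mul]
  have hsumc : (∑ i : Fin (m + n), c i) = 0 := by
    have h := sum_ite_fin m n (1/((m:ℝ)+n) - 1/(n:ℝ)) (1/((m:ℝ)+n))
    simp only [hc]
    rw [h]
    field_simp
    ring
  have hsumd : (∑ i : Fin (m + n), d i) = 1 := by
    have h := sum_ite_fin m n (1/(n:ℝ)) 0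
    simp only [hd]
    rw [h]
    field_simp
    ring
  have hES : ∫ ω, S ω ∂μ = θ := by
    simp only [hS]
    rw [integral_finset_sum _ (fun i _ => hTint i)]
    simp_rw [hTavg]
    rw [Finset.sum_add_distrib, ← Finset.sum_mul, ← Finset.sum_mul, hsumc, hsumd]
    ring
  have hSmem : MemLp S 2 μ := by
    have h := memLp_finset_sum' (μ := μ) (s := Finset.univ) (f := T) (fun i _ => hTmem i)
    have hfun : S = ∑ i, T i := by funext ω; simp [hS]
    rwa [hfun]
  -- LHS = variance S
  have hLvar : ∫ ω, (θ - S ω) ^ 2 ∂μ = variance S μ := by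
    rw [variance_eq_integral hSmem.aemeasurable]
    have : μ[S] = θ := hES
    rw [this]
    refine integral_congr_ae (Filter.Eventually.of_forall fun ω => ?_)
    ring
  -- variance of sum
  have hvarsum : variance S μ = ∑ i, variance (T i) μ := by
    have hpair : (↑(Finset.univ : Finset (Fin (m+n))) : Set (Fin (m+n))).Pairwise
        fun i j => IndepFun (T i) (T j) μ := by
      intro i _ j _ hij
      exact (h_indep.indepFun hij).comp (hφm i) (hφm j)
    have h := IndepFun.variance_sum (μ := μ) (X := T) (s := Finset.univ)
      (fun i _ => hTmem i) hpair
    have hfun : S = ∑ i, T i := by funext ω; simp [hS]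
    rw [hfun]; exact h
  -- per-term bound
  have hbound : ∀ i, variance (T i) μ ≤ 2 * (c i)^2 * Vg + 2 * (d i)^2 * VY := by
    intro i
    rw [(hTid i).variance_eq]
    have h := var_add_le' (μ := μ) (fun ω => c i * f (X i0 ω)) (fun ω => d i * Y i0 ω)
      (hfX2.const_mul (c i)) (hY2.const_mul (d i))
    have h1 : variance (fun ω => c i * f (X i0 ω)) μ = (c i)^2 * Vg :=
      variance_const_mul (c i) (fun ω => f (X i0 ω)) μ
    have h2 : variance (fun ω => d i * Y i0 ω) μ = (d i)^2 * VY :=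
      variance_const_mul (d i) (Y i0) μ
    have heq : ((fun ω => c i * f (X i0 ω)) + fun ω => d i * Y i0 ω)
        = fun ω => c i * f (X i0 ω) + d i * Y i0 ω := rfl
    rw [heq, h1, h2] at h
    linarith
  -- put it together
  have hsum2 : (∑ i : Fin (m+n), (2 * (c i)^2 * Vg + 2 * (d i)^2 * VY))
      = (n:ℝ) * (2 * (1/((m:ℝ)+n) - 1/(n:ℝ))^2 * Vg + 2 * (1/(n:ℝ))^2 * VY)
        + (m:ℝ) * (2 * (1/((m:ℝ)+n))^2 * Vg + 2 * (0:ℝ)^2 * VY) := by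
    rw [← sum_ite_fin m n _ _]
    refine Finset.sum_congr rfl fun i _ => ?_
    simp only [hc, hd]
    split_ifs <;> ring
  have hfinal : (n:ℝ) * (2 * (1/((m:ℝ)+n) - 1/(n:ℝ))^2 * Vg + 2 * (1/(n:ℝ))^2 * VY)
        + (m:ℝ) * (2 * (1/((m:ℝ)+n))^2 * Vg + 2 * (0:ℝ)^2 * VY)
      ≤ 2 * ((1/(n:ℝ)) * VY + (((m:ℝ) + 2*n) / (((m:ℝ)+n) * n)) * Vg) := by
    have hmn : (0:ℝ) < (m:ℝ) + n := by linarith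
    have e1 : (n:ℝ) * (2 * (1/((m:ℝ)+n) - 1/(n:ℝ))^2 * Vg + 2 * (1/(n:ℝ))^2 * VY)
        + (m:ℝ) * (2 * (1/((m:ℝ)+n))^2 * Vg + 2 * (0:ℝ)^2 * VY)
        = 2 * ((1/(n:ℝ)) * VY + ((m:ℝ) / (((m:ℝ)+n) * n)) * Vg) := by
      field_simp
      ring
    rw [e1]
    have hc2 : (m:ℝ) / (((m:ℝ)+n) * n) ≤ ((m:ℝ) + 2*n) / (((m:ℝ)+n) * n) :=
      (div_le_div_iff_of_pos_right (by positivity)).mpr (by linarith)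
    nlinarith [mul_le_mul_of_nonneg_right hc2 hVgnn]
  have hchain : (∑ i, variance (T i) μ)
      ≤ 2 * ((1/(n:ℝ)) * VY + (((m:ℝ) + 2*n) / (((m:ℝ)+n) * n)) * Vg) :=
    le_trans (Finset.sum_le_sum fun i _ => hbound i) (by rw [hsum2]; exact hfinal)
  have hSeq : ∀ ω, (1 / ((m:ℝ) + n)) * (∑ i : Fin (m + n), f (X i ω))
      - (1 / (n : ℝ)) * ∑ i ∈ Finset.univ.filter (fun i : Fin (m + n) => m ≤ (i : ℕ)),
          (f (X i ω) - Y i ω) = S ω := by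
    intro ω
    simp only [hS, hT, hφ]
    rw [Finset.sum_filter, Finset.mul_sum, Finset.mul_sum, ← Finset.sum_sub_distrib]
    refine Finset.sum_congr rfl fun i _ => ?_
    simp only [hc, hd]
    split_ifs <;> ring
  have hVYeq : ∫ ω, (Y i0 ω - θ) ^ 2 ∂μ = VY := by
    rw [hVY, variance_eq_integral hY2.aemeasurable]
  have hVgeq : ∫ ω, (f (X i0 ω) - G) ^ 2 ∂μ = Vg := by
    rw [hVg, variance_eq_integral hfX2.aemeasurable]
  calc ∫ ω, (θ - ((1 / ((m:ℝ) + n)) * (∑ i : Fin (m + n), f (X i ω))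
          - (1 / (n : ℝ)) * ∑ i ∈ Finset.univ.filter (fun i : Fin (m + n) => m ≤ (i : ℕ)),
              (f (X i ω) - Y i ω))) ^ 2 ∂μ
      = ∫ ω, (θ - S ω) ^ 2 ∂μ := by
        refine integral_congr_ae (Filter.Eventually.of_forall fun ω => ?_)
        dsimp only
        rw [hSeq ω]
    _ = variance S μ := hLvar
    _ = ∑ i, variance (T i) μ := hvarsum
    _ ≤ 2 * ((1/(n:ℝ)) * VY + (((m:ℝ) + 2*n) / (((m:ℝ)+n) * n)) * Vg) := hchain
    _ = 2 * ((1 / (n : ℝ)) * (∫ ω, (Y i0 ω - θ) ^ 2 ∂μ)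
          + (((m:ℝ) + 2 * n) / (((m:ℝ) + n) * n)) * ∫ ω, (f (X i0 ω) - G) ^ 2 ∂μ) := by
        rw [hVYeq, hVgeq]
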